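/- For every n ≥ 3, the 2-optimal rubbling number of the cycle C_n equals n; that is, the minimum size of a 2-solvable pebble distribution on C_n is exactly n. -/

import Mathlib

open SimpleGraph

/-- A single rubbling move on `G`: either a pebbling move (remove two pebbles at `v`,
add one at an adjacent vertex `u`) or a strict rubbling move (remove one pebble each at
distinct `v` and `w`, both adjacent to `u`, and add one pebble at `u`). -/
def RubblingStep {V : Type*} [DecidableEq V] (G : SimpleGraph V) (p q : V → ℕ) : Prop :=
  (∃ v u, G.Adj v u ∧ 2 ≤ p v ∧
      q = fun x => if x = v then p x - 2 else if x = u then p x + 1 else p x) ∨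
  (∃ v w u, v ≠ w ∧ G.Adj v u ∧ G.Adj w u ∧ 1 ≤ p v ∧ 1 ≤ p w ∧
      q = fun x => if x = v then p x - 1 else if x = w then p x - 1
          else if x = u then p x + 1 else p x)

/-- `q` is obtainable from `p` by an executable rubbling sequence. -/
def RubblingReach {V : Type*} [DecidableEq V] (G : SimpleGraph V) : (V → ℕ) → (V → ℕ) → Prop :=
  Relation.ReflTransGen (RubblingStep G)

/-- The vertex `u` is `k`-reachable from the distribution `p`. -/
def KReachable {V : Type*} [DecidableEq V] (G : SimpleGraph V) (p : V → ℕ) (u : V) (k : ℕ) : Prop :=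
  ∃ q, RubblingReach G p q ∧ k ≤ q u

/-- `p` is solvable: every vertex is reachable. -/
def Solvable {V : Type*} [DecidableEq V] (G : SimpleGraph V) (p : V → ℕ) : Prop :=
  ∀ u, KReachable G p u 1

/-- The optimal rubbling number: the minimum size of a solvable distribution. -/
noncomputable def optRub {V : Type*} [DecidableEq V] [Fintype V] (G : SimpleGraph V) : ℕ :=
  sInf {m | ∃ p : V → ℕ, Solvable G p ∧ ∑ v, p v = m}

open SimpleGraph Finset
open Fin.CommRing
set_option linter.unusedSectionVars false
set_option linter.unusedVariables false
set_option maxHeartbeats 1000000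

section FinFacts
variable {n : ℕ} [NeZero n]

lemma valOne (hn : 3 ≤ n) : ((1:Fin n)).val = 1 := by
  rw [Fin.val_one']; exact Nat.mod_eq_of_lt (by omega)

lemma valNeZero {a : Fin n} (h : a ≠ 0) : a.val ≠ 0 := by
  intro e; exact h (Fin.ext (by simpa using e))

lemma ddL_pos (u v : Fin n) (h : v ≠ u) : 1 ≤ (u - v).val := by
  have : u - v ≠ 0 := sub_ne_zero.mpr (fun e => h e.symm)
  have := valNeZero this; omega

lemma ddL_le (u v : Fin n) : (u - v).val ≤ n - 1 := by
  have := (u-v).isLt; omega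

lemma val_sub_one (hn : 3 ≤ n) (x : Fin n) (hx : x ≠ 0) : (x - 1).val = x.val - 1 := by
  have h3 : x.val ≠ 0 := valNeZero hx
  have h4 := x.isLt
  rw [Fin.sub_def, valOne hn]
  show (n - 1 + x.val) % n = x.val - 1
  have e : n - 1 + x.val = n + (x.val - 1) := by omega
  rw [e, Nat.add_mod_left, Nat.mod_eq_of_lt (by omega)]

lemma val_add_one (hn : 3 ≤ n) (x : Fin n) :
    (x + 1).val = x.val + 1 ∨ (x.val = n - 1 ∧ (x+1).val = 0) := by
  rw [Fin.add_def, valOne hn]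
  show _ ∨ (_ ∧ (x.val + 1) % n = 0)
  have := x.isLt
  rcases Nat.lt_or_ge (x.val + 1) n with h | h
  · left; exact Nat.mod_eq_of_lt h
  · right; have e : x.val + 1 = n := by omega
    constructor; omega; rw [e, Nat.mod_self]

lemma ddL_step (hn : 3 ≤ n) (u s : Fin n) (hs : s ≠ u) :
    (u - (s+1)).val = (u - s).val - 1 := by
  have h2 : u - (s+1) = (u - s) - 1 := by ring
  rw [h2, val_sub_one hn _ (sub_ne_zero.mpr (fun e => hs e.symm))]

lemma ddR_step (hn : 3 ≤ n) (u s : Fin n) (h1 : s ≠ u) (h2 : s + 1 ≠ u) :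
    ((s+1) - u).val = (s - u).val + 1 := by
  have e : (s+1) - u = (s - u) + 1 := by ring
  rw [e]
  rcases val_add_one hn (s - u) with h | ⟨h, h'⟩
  · exact h
  · exfalso
    have : (s - u) + 1 = 0 := Fin.ext (by simp [h'])
    have : s + 1 = u := by
      have e2 : s - u = -1 := by linear_combination (norm := ring_nf) this
      rw [sub_eq_iff_eq_add] at e2
      rw [e2]; ring
    exact h2 this

lemma valNegOne (hn : 3 ≤ n) : ((-1 : Fin n)).val = n - 1 := by
  have : (-1 : Fin n) = 0 - 1 := by ring
  rw [this, Fin.sub_def, valOne hn]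
  show (n - 1 + (0:Fin n).val) % n = n - 1
  simp only [Fin.val_zero, Nat.add_zero]
  exact Nat.mod_eq_of_lt (by omega)

lemma adj_iff (hn : 3 ≤ n) {a b : Fin n} :
    (cycleGraph n).Adj a b ↔ a = b + 1 ∨ b = a + 1 := by
  rw [cycleGraph_adj']
  constructor
  · rintro (h | h)
    · left
      have : a - b = 1 := Fin.ext (by rw [h, valOne hn])
      rw [← this]; ring
    · right
      have : b - a = 1 := Fin.ext (by rw [h, valOne hn])
      rw [← this]; ring
  · rintro (h | h)
    · left; rw [h]; have : b + 1 - b = 1 := by ring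
      rw [this, valOne hn]
    · right; rw [h]; have : a + 1 - a = 1 := by ring
      rw [this, valOne hn]

lemma finTwoNeZero (hn : 3 ≤ n) : (1 + 1 : Fin n) ≠ 0 := by
  intro h
  have h0 : ((1 + 1 : Fin n)).val = 0 := by rw [h]; simp
  have e : ((1+1:Fin n)).val = ((1:Fin n).val + (1:Fin n).val) % n := rfl
  rw [valOne hn] at e
  rw [Nat.mod_eq_of_lt (by omega)] at e
  omega

lemma nbr_ne (hn : 3 ≤ n) (t : Fin n) : t + 1 ≠ t - 1 := by
  intro h
  have : (1 + 1 : Fin n) = 0 := by linear_combination (norm := ring_nf) h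
  exact finTwoNeZero hn this

lemma add_one_ne (hn : 3 ≤ n) (t : Fin n) : t + 1 ≠ t := by
  intro h
  have h1 : (1 : Fin n) = 0 := by linear_combination (norm := ring_nf) h
  have := valOne (n := n) hn
  rw [h1] at this; simp at this

lemma sub_one_ne (hn : 3 ≤ n) (t : Fin n) : t - 1 ≠ t := by
  intro h
  have h1 : (-1 : Fin n) = 0 := by linear_combination (norm := ring_nf) h
  have h2 := valNegOne (n:=n) hn
  rw [h1] at h2; simp at h2; omega

end FinFacts

section Inv

variable {n : ℕ} [NeZero n]

/-- weighted sum toward `u` with weight function `w`, over vertices other than `u` -/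
def WS (u : Fin n) (w x : Fin n → ℕ) : ℕ := ∑ v ∈ Finset.univ.erase u, x v * w v

def wL (u : Fin n) : Fin n → ℕ := fun v => 2^(n - (u - v).val)
def wR (u : Fin n) : Fin n → ℕ := fun v => 2^(n - (v - u).val)

def vl (u : Fin n) (x y : Fin n → ℕ) : ℕ :=
  (WS u (wL u) x / 2^(n-1) + WS u (wR u) y / 2^(n-1)) / 2

def Good (u : Fin n) (q : Fin n → ℕ) : Prop :=
  ∃ x y : Fin n → ℕ, (∀ v, x v + y v ≤ q v) ∧ x u = 0 ∧ y u = 0 ∧ 2 ≤ q u + vl u x y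

lemma WS_mono (u : Fin n) (w x x' : Fin n → ℕ) (h : ∀ v, x v ≤ x' v) :
    WS u w x ≤ WS u w x' :=
  Finset.sum_le_sum (fun v _ => Nat.mul_le_mul_right _ (h v))

lemma WS_add (u : Fin n) (w x y : Fin n → ℕ) :
    WS u w (fun v => x v + y v) = WS u w x + WS u w y := by
  unfold WS
  rw [← Finset.sum_add_distrib]
  exact Finset.sum_congr rfl (fun v _ => by ring)

lemma WS_single (u : Fin n) (w : Fin n → ℕ) (s : Fin n) (hs : s ≠ u) (c : ℕ) :
    WS u w (fun v => if v = s then c else 0) = c * w s := by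
  unfold WS
  rw [Finset.sum_eq_single_of_mem s (Finset.mem_erase.mpr ⟨hs, Finset.mem_univ s⟩)]
  · simp
  · intro b _ hb; simp [hb]

lemma WS_dec (u : Fin n) (w x : Fin n → ℕ) (t : Fin n) (ht : t ≠ u) (hx : 1 ≤ x t) :
    WS u w x = WS u w (fun v => if v = t then x v - 1 else x v) + w t := by
  have : x = fun v => (if v = t then x v - 1 else x v) + (if v = t then 1 else 0) := by
    funext v; by_cases h : v = t <;> simp [h] <;> omega
  conv_lhs => rw [this]
  rw [WS_add]
  congr 1
  have : (fun v => if v = t then (1:ℕ) else 0) = fun v => if v = t then 1 else 0 := rfl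
  rw [WS_single u w t ht 1]; ring

lemma wL_le (hn : 3 ≤ n) (u v : Fin n) (h : v ≠ u) : wL u v ≤ 2^(n-1) := by
  apply Nat.pow_le_pow_right (by norm_num)
  have := ddL_pos u v h; omega

lemma wR_le (hn : 3 ≤ n) (u v : Fin n) (h : v ≠ u) : wR u v ≤ 2^(n-1) := by
  apply Nat.pow_le_pow_right (by norm_num)
  have h1 : 1 ≤ (v - u).val := by
    have h0 : v - u ≠ 0 := sub_ne_zero.mpr h
    have := valNeZero h0; omega
  omega

lemma wL_ne_u_eq (hn : 3 ≤ n) (u : Fin n) : wL u (u - 1) = 2^(n-1) := by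
  unfold wL
  have : (u - (u - 1)) = 1 := by ring
  rw [this, valOne hn]

lemma wR_ne_u_eq (hn : 3 ≤ n) (u : Fin n) : wR u (u + 1) = 2^(n-1) := by
  unfold wR
  have : ((u+1) - u) = 1 := by ring
  rw [this, valOne hn]

-- key div lemmas
lemma div_bump (E a c : ℕ) (hE : 0 < E) : (a + c * E) / E = a / E + c :=
  Nat.add_mul_div_right a c hE

lemma div_drop (E a : ℕ) (hE : 0 < E) (b : ℕ) (hb : b ≤ E) (hba : b ≤ a) :
    a / E - 1 ≤ (a - b) / E := by
  rcases Nat.lt_or_ge a E with h | h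
  · simp [Nat.div_eq_of_lt h]
  · have h3 : a / E = (a - E)/E + 1 := by
      rw [← Nat.add_div_right (a-E) hE]; congr 1; omega
    have h4 : (a - E) / E ≤ (a - b)/E := Nat.div_le_div_right (by omega)
    rw [h3, Nat.add_sub_cancel]; exact h4

end Inv
section Inv2
variable {n : ℕ} [NeZero n]

lemma nbr_of_adj (hn : 3 ≤ n) {a t : Fin n} (h : (cycleGraph n).Adj a t) :
    a = t + 1 ∨ a = t - 1 := by
  rcases (adj_iff hn).mp h with h1 | h1
  · left; exact h1
  · right; rw [h1]; ring

lemma wL_pair (hn : 3 ≤ n) (u v t : Fin n) (hv : v ≠ u) (ht : t ≠ u)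
    (hadj : (cycleGraph n).Adj v t) : wL u t ≤ 2 * wL u v := by
  have hdv1 := ddL_pos u v hv
  have hdv2 := ddL_le u v
  have hdt1 := ddL_pos u t ht
  have hdt2 := ddL_le u t
  rcases nbr_of_adj hn hadj.symm with h | h
  · -- t = v + 1 : ddL t = ddL v - 1
    have e := ddL_step hn u v hv
    rw [← h] at e
    unfold wL
    have : 2 * 2^(n - (u-v).val) = 2^(n - (u-v).val + 1) := by ring
    rw [this]
    apply Nat.pow_le_pow_right (by norm_num); omega
  · -- t = v - 1, i.e. v = t + 1 : ddL v = ddL t - 1 : wL v = 2 wL t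
    have hv' : v = t + 1 := by rw [h]; ring
    have e := ddL_step hn u t ht
    rw [← hv'] at e
    unfold wL
    have h2 : 2^(n - (u-t).val) ≤ 2^(n - (u-v).val) := by
      apply Nat.pow_le_pow_right (by norm_num); omega
    omega

lemma wR_pair (hn : 3 ≤ n) (u v t : Fin n) (hv : v ≠ u) (ht : t ≠ u)
    (hadj : (cycleGraph n).Adj v t) : wR u t ≤ 2 * wR u v := by
  have hdv1 : 1 ≤ (v - u).val := ddL_pos v u (fun e => hv e.symm)
  have hdv2 : (v-u).val ≤ n - 1 := ddL_le v u
  have hdt1 : 1 ≤ (t - u).val := ddL_pos t u (fun e => ht e.symm)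
  have hdt2 : (t-u).val ≤ n - 1 := ddL_le t u
  rcases nbr_of_adj hn hadj.symm with h | h
  · -- t = v + 1 : ddR t = ddR v + 1 : wR t = wR v / 2
    have e := ddR_step hn u v hv (by rw [← h]; exact ht)
    rw [← h] at e
    unfold wR
    have h2 : 2^(n - (t-u).val) ≤ 2^(n - (v-u).val) := by
      apply Nat.pow_le_pow_right (by norm_num); omega
    omega
  · -- v = t + 1 : ddR v = ddR t + 1
    have hv' : v = t + 1 := by rw [h]; ring
    have e := ddR_step hn u t ht (by rw [← hv']; exact hv)
    rw [← hv'] at e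
    unfold wR
    have : 2 * 2^(n - (v-u).val) = 2^(n - (v-u).val + 1) := by ring
    rw [this]
    apply Nat.pow_le_pow_right (by norm_num); omega

lemma wL_up (hn : 3 ≤ n) (u t : Fin n) (ht : t ≠ u) (ht1 : t + 1 ≠ u) :
    wL u t ≤ wL u (t+1) := by
  have e := ddL_step hn u t ht
  have h1 := ddL_pos u t ht
  unfold wL
  apply Nat.pow_le_pow_right (by norm_num); omega

lemma wR_dn (hn : 3 ≤ n) (u t : Fin n) (ht : t ≠ u) (ht1 : t - 1 ≠ u) :
    wR u t ≤ wR u (t-1) := by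
  have e := ddR_step hn u (t-1) ht1 (by rw [sub_add_cancel]; exact ht)
  rw [sub_add_cancel] at e
  unfold wR
  apply Nat.pow_le_pow_right (by norm_num)
  have h1 : 1 ≤ (t - 1 - u).val := ddL_pos (t-1) u (fun e' => ht1 e'.symm)
  have := ddL_le t u
  omega

-- value helpers; hx hy opaque
lemma Epos : 0 < 2^(n-1) := Nat.pow_pos (by norm_num)

lemma vl_mono (u : Fin n) (x y x' y' : Fin n → ℕ) (hx : ∀ v, x v ≤ x' v) (hy : ∀ v, y v ≤ y' v) :
    vl u x y ≤ vl u x' y' := by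
  unfold vl
  have h1 := WS_mono u (wL u) x x' hx
  have h2 := WS_mono u (wR u) y y' hy
  have h3 := Nat.div_le_div_right (c := 2^(n-1)) h1
  have h4 := Nat.div_le_div_right (c := 2^(n-1)) h2
  exact Nat.div_le_div_right (by omega)

lemma vl_bump2x (hn : 3 ≤ n) (u : Fin n) (x y : Fin n → ℕ) :
    vl u (fun z => x z + if z = u - 1 then 2 else 0) y = vl u x y + 1 := by
  unfold vl
  rw [WS_add u (wL u) x, WS_single u (wL u) (u-1) (sub_one_ne hn u) 2, wL_ne_u_eq hn u]
  rw [div_bump _ _ _ Epos]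
  omega

lemma vl_bump2y (hn : 3 ≤ n) (u : Fin n) (x y : Fin n → ℕ) :
    vl u x (fun z => y z + if z = u + 1 then 2 else 0) = vl u x y + 1 := by
  unfold vl
  rw [WS_add u (wR u) y, WS_single u (wR u) (u+1) (add_one_ne hn u) 2, wR_ne_u_eq hn u]
  rw [div_bump _ _ _ Epos]
  omega

lemma vl_bump11 (hn : 3 ≤ n) (u : Fin n) (x y : Fin n → ℕ) :
    vl u (fun z => x z + if z = u - 1 then 1 else 0) (fun z => y z + if z = u + 1 then 1 else 0)
      = vl u x y + 1 := by
  unfold vl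
  rw [WS_add u (wL u) x, WS_single u (wL u) (u-1) (sub_one_ne hn u) 1, wL_ne_u_eq hn u]
  rw [WS_add u (wR u) y, WS_single u (wR u) (u+1) (add_one_ne hn u) 1, wR_ne_u_eq hn u]
  rw [div_bump _ _ _ Epos, div_bump _ _ _ Epos]
  omega

lemma vl_dec_x (hn : 3 ≤ n) (u : Fin n) (x y : Fin n → ℕ) (t : Fin n) (ht : t ≠ u)
    (hx : 1 ≤ x t) : vl u x y ≤ vl u (fun v => if v = t then x v - 1 else x v) y + 1 := by
  unfold vl
  have e := WS_dec u (wL u) x t ht hx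
  have hle : WS u (wL u) x ≤ WS u (wL u) (fun v => if v = t then x v - 1 else x v) + 2^(n-1) := by
    have := wL_le hn u t ht; omega
  have h2 : WS u (wL u) x / 2^(n-1) ≤
      WS u (wL u) (fun v => if v = t then x v - 1 else x v) / 2^(n-1) + 1 := by
    calc WS u (wL u) x / 2^(n-1) ≤ (WS u (wL u) (fun v => if v = t then x v - 1 else x v) + 2^(n-1)) / 2^(n-1) :=
          Nat.div_le_div_right hle
      _ = _ := by rw [Nat.add_div_right _ Epos]
  omega

lemma vl_dec_y (hn : 3 ≤ n) (u : Fin n) (x y : Fin n → ℕ) (t : Fin n) (ht : t ≠ u)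
    (hy : 1 ≤ y t) : vl u x y ≤ vl u x (fun v => if v = t then y v - 1 else y v) + 1 := by
  unfold vl
  have e := WS_dec u (wR u) y t ht hy
  have hle : WS u (wR u) y ≤ WS u (wR u) (fun v => if v = t then y v - 1 else y v) + 2^(n-1) := by
    have := wR_le hn u t ht; omega
  have h2 : WS u (wR u) y / 2^(n-1) ≤
      WS u (wR u) (fun v => if v = t then y v - 1 else y v) / 2^(n-1) + 1 := by
    calc WS u (wR u) y / 2^(n-1) ≤ (WS u (wR u) (fun v => if v = t then y v - 1 else y v) + 2^(n-1)) / 2^(n-1) :=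
          Nat.div_le_div_right hle
      _ = _ := by rw [Nat.add_div_right _ Epos]
  omega

lemma vl_decadd_x (u : Fin n) (x y : Fin n → ℕ) (t s : Fin n) (ht : t ≠ u) (hs : s ≠ u)
    (hx : 1 ≤ x t) (c : ℕ) (hw : wL u t ≤ c * wL u s) :
    vl u x y ≤ vl u (fun v => (if v = t then x v - 1 else x v) + (if v = s then c else 0)) y := by
  unfold vl
  have e := WS_dec u (wL u) x t ht hx
  rw [WS_add u (wL u) _ , WS_single u (wL u) s hs c]
  have : WS u (wL u) x ≤ WS u (wL u) (fun v => if v = t then x v - 1 else x v) + c * wL u s := by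
    omega
  have h2 := Nat.div_le_div_right (c := 2^(n-1)) this
  omega

lemma vl_decadd_y (u : Fin n) (x y : Fin n → ℕ) (t s : Fin n) (ht : t ≠ u) (hs : s ≠ u)
    (hy : 1 ≤ y t) (c : ℕ) (hw : wR u t ≤ c * wR u s) :
    vl u x y ≤ vl u x (fun v => (if v = t then y v - 1 else y v) + (if v = s then c else 0)) := by
  unfold vl
  have e := WS_dec u (wR u) y t ht hy
  rw [WS_add u (wR u) _ , WS_single u (wR u) s hs c]
  have : WS u (wR u) y ≤ WS u (wR u) (fun v => if v = t then y v - 1 else y v) + c * wR u s := by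
    omega
  have h2 := Nat.div_le_div_right (c := 2^(n-1)) this
  omega

end Inv2
section Step
variable {n : ℕ} [NeZero n]

lemma step_good (hn : 3 ≤ n) (u : Fin n) (p q : Fin n → ℕ)
    (hs : RubblingStep (cycleGraph n) p q) (hg : Good u q) : Good u p := by
  obtain ⟨x, y, hxy, hxu, hyu, hval⟩ := hg
  rcases hs with ⟨v, t, hadj, hpv, hqdef⟩ | ⟨a, b, t, hab, hat, hbt, hpa, hpb, hqdef⟩
  · -- pebbling move v → t
    have hvt : v ≠ t := hadj.ne
    have hqv : q v = p v - 2 := by rw [hqdef]; simp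
    have hqt : q t = p t + 1 := by rw [hqdef]; simp [if_neg (Ne.symm hvt)]
    have hqo : ∀ z, z ≠ v → z ≠ t → q z = p z := by
      intro z h1 h2; rw [hqdef]; simp [if_neg h1, if_neg h2]
    by_cases htu : t = u
    · -- pebbling into u; subst replaces u by t
      subst htu
      have hvu : v ≠ t := hvt
      rcases nbr_of_adj hn hadj with hv1 | hv1
      · -- v = t + 1 : bump y by 2 at v
        refine ⟨x, fun z => y z + if z = t + 1 then 2 else 0, ?_, hxu,
          by simp [hyu, (add_one_ne hn t).symm], ?_⟩
        · intro z
          beta_reduce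
          by_cases h1 : z = v
          · subst h1; rw [← hv1, if_pos rfl]
            have h9 := hxy z; rw [hqv] at h9; omega
          · have h2 := hxy z
            by_cases h3 : z = t
            · subst h3; rw [if_neg (by rw [← hv1]; exact fun e => h1 e)]
              simp [hxu, hyu]
            · rw [hqo z h1 h3] at h2
              rw [if_neg (by rw [← hv1]; exact h1)]; omega
        · rw [vl_bump2y hn t x y]
          rw [hqt] at hval
          omega
      · -- v = t - 1 : bump x by 2 at v
        refine ⟨fun z => x z + if z = t - 1 then 2 else 0, y, ?_,
          by simp [hxu, (sub_one_ne hn t).symm], hyu, ?_⟩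
        · intro z
          beta_reduce
          by_cases h1 : z = v
          · subst h1; rw [← hv1, if_pos rfl]
            have h9 := hxy z; rw [hqv] at h9; omega
          · have h2 := hxy z
            by_cases h3 : z = t
            · subst h3; rw [if_neg (by rw [← hv1]; exact fun e => h1 e)]
              simp [hxu, hyu]
            · rw [hqo z h1 h3] at h2
              rw [if_neg (by rw [← hv1]; exact h1)]; omega
        · rw [vl_bump2x hn t x y]
          rw [hqt] at hval
          omega
    · by_cases hvu : v = u
      · -- pebbling out of u; subst replaces u by v
        subst hvu
        have htv : t ≠ v := fun e => hvt e.symm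
        by_cases hb : x t + y t ≤ p t
        · refine ⟨x, y, ?_, hxu, hyu, ?_⟩
          · intro z
            beta_reduce
            by_cases h1 : z = v; · subst h1; simp [hxu, hyu]
            by_cases h2 : z = t; · subst h2; exact hb
            rw [← hqo z h1 h2]; exact hxy z
          · rw [hqv] at hval; omega
        · have hbt' : x t + y t = p t + 1 := by have := hxy t; rw [hqt] at this; omega
          rcases Nat.lt_or_ge 0 (x t) with hxt | hxt
          · refine ⟨fun z => if z = t then x z - 1 else x z, y, ?_,
              by beta_reduce; rw [if_neg hvt]; exact hxu, hyu, ?_⟩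
            · intro z
              beta_reduce
              by_cases h2 : z = t
              · subst h2; rw [if_pos rfl]; omega
              by_cases h1 : z = v; · subst h1; rw [if_neg hvt]; simp [hxu, hyu]
              rw [if_neg h2, ← hqo z h1 h2]; exact hxy z
            · have := vl_dec_x hn v x y t htv hxt
              rw [hqv] at hval; omega
          · have hyt : 1 ≤ y t := by omega
            refine ⟨x, fun z => if z = t then y z - 1 else y z, ?_, hxu,
              by beta_reduce; rw [if_neg hvt]; exact hyu, ?_⟩
            · intro z
              beta_reduce
              by_cases h2 : z = t
              · subst h2; rw [if_pos rfl]; omega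
              by_cases h1 : z = v; · subst h1; rw [if_neg hvt]; simp [hxu, hyu]
              rw [if_neg h2, ← hqo z h1 h2]; exact hxy z
            · have := vl_dec_y hn v x y t htv hyt
              rw [hqv] at hval; omega
      · -- v ≠ u, t ≠ u
        have htu' : t ≠ u := htu
        have hqu : q u = p u := hqo u (fun e => hvu e.symm) (fun e => htu e.symm)
        by_cases hb : x t + y t ≤ p t
        · refine ⟨x, y, ?_, hxu, hyu, ?_⟩
          · intro z
            beta_reduce
            by_cases h2 : z = t; · subst h2; exact hb
            by_cases h1 : z = v
            · subst h1; have h9 := hxy z; rw [hqv] at h9; omega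
            rw [← hqo z h1 h2]; exact hxy z
          · rw [hqu] at hval; omega
        · have hbt' : x t + y t = p t + 1 := by have := hxy t; rw [hqt] at this; omega
          rcases Nat.lt_or_ge 0 (x t) with hxt | hxt
          · -- decrement x at t, add 2 at v on x side
            refine ⟨fun z => (if z = t then x z - 1 else x z) + (if z = v then 2 else 0), y,
              ?_, by beta_reduce; rw [if_neg (fun e => htu' e.symm), if_neg (fun e => hvu e.symm)]; simp [hxu], hyu, ?_⟩
            · intro z
              beta_reduce
              by_cases h1 : z = v
              · subst h1; rw [if_neg hvt, if_pos rfl]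
                have h9 := hxy z; rw [hqv] at h9; omega
              by_cases h2 : z = t
              · subst h2; rw [if_pos rfl, if_neg (fun e => hvt e.symm)]; omega
              rw [if_neg h2, if_neg h1, ← hqo z h1 h2]; exact hxy z
            · have := vl_decadd_x u x y t v htu' hvu hxt 2 (wL_pair hn u v t hvu htu' hadj)
              rw [hqu] at hval; omega
          · have hyt : 1 ≤ y t := by omega
            refine ⟨x, fun z => (if z = t then y z - 1 else y z) + (if z = v then 2 else 0),
              ?_, hxu, by beta_reduce; rw [if_neg (fun e => htu' e.symm), if_neg (fun e => hvu e.symm)]; simp [hyu], ?_⟩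
            · intro z
              beta_reduce
              by_cases h1 : z = v
              · subst h1; rw [if_neg hvt, if_pos rfl]
                have h9 := hxy z; rw [hqv] at h9; omega
              by_cases h2 : z = t
              · subst h2; rw [if_pos rfl, if_neg (fun e => hvt e.symm)]; omega
              rw [if_neg h2, if_neg h1, ← hqo z h1 h2]; exact hxy z
            · have := vl_decadd_y u x y t v htu' hvu hyt 2 (wR_pair hn u v t hvu htu' hadj)
              rw [hqu] at hval; omega
  · -- strict move: sources a b, target t
    have hat' : a ≠ t := hat.ne
    have hbt' : b ≠ t := hbt.ne
    have hqa : q a = p a - 1 := by rw [hqdef]; simp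
    have hqb : q b = p b - 1 := by rw [hqdef]; simp [if_neg (Ne.symm hab)]
    have hqt : q t = p t + 1 := by rw [hqdef]; simp [if_neg (Ne.symm hat'), if_neg (Ne.symm hbt')]
    have hqo : ∀ z, z ≠ a → z ≠ b → z ≠ t → q z = p z := by
      intro z h1 h2 h3; rw [hqdef]; simp [if_neg h1, if_neg h2, if_neg h3]
    -- {a, b} = {t+1, t-1}
    have hori : (a = t + 1 ∧ b = t - 1) ∨ (a = t - 1 ∧ b = t + 1) := by
      rcases nbr_of_adj hn hat with h1 | h1 <;> rcases nbr_of_adj hn hbt with h2 | h2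
      · exact absurd (h1.trans h2.symm) hab
      · exact Or.inl ⟨h1, h2⟩
      · exact Or.inr ⟨h1, h2⟩
      · exact absurd (h1.trans h2.symm) hab
    have hqtp1 : q (t+1) = p (t+1) - 1 := by
      rcases hori with ⟨ha, hb⟩ | ⟨ha, hb⟩
      · rw [← ha]; exact hqa
      · rw [← hb]; exact hqb
    have hqtm1 : q (t-1) = p (t-1) - 1 := by
      rcases hori with ⟨ha, hb⟩ | ⟨ha, hb⟩
      · rw [← hb]; exact hqb
      · rw [← ha]; exact hqa
    have hptp1 : 1 ≤ p (t+1) := by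
      rcases hori with ⟨ha, hb⟩ | ⟨ha, hb⟩
      · rw [← ha]; exact hpa
      · rw [← hb]; exact hpb
    have hptm1 : 1 ≤ p (t-1) := by
      rcases hori with ⟨ha, hb⟩ | ⟨ha, hb⟩
      · rw [← hb]; exact hpb
      · rw [← ha]; exact hpa
    have hmem : ∀ z, z ≠ t → z ≠ t + 1 → z ≠ t - 1 → q z = p z := by
      intro z h1 h2 h3
      apply hqo z
      · rcases hori with ⟨ha, hb⟩ | ⟨ha, hb⟩
        · rw [ha]; exact h2
        · rw [ha]; exact h3
      · rcases hori with ⟨ha, hb⟩ | ⟨ha, hb⟩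
        · rw [hb]; exact h3
        · rw [hb]; exact h2
      · exact h1
    have hne1 : t + 1 ≠ t := add_one_ne hn t
    have hne2 : t - 1 ≠ t := sub_one_ne hn t
    have hne3 : t + 1 ≠ t - 1 := nbr_ne hn t
    by_cases htu : t = u
    · -- strict into u; subst replaces u by t
      subst htu
      refine ⟨fun z => x z + if z = t - 1 then 1 else 0,
              fun z => y z + if z = t + 1 then 1 else 0, ?_,
              by simp [hxu, (sub_one_ne hn t).symm], by simp [hyu, (add_one_ne hn t).symm], ?_⟩
      · intro z
        beta_reduce
        by_cases h1 : z = t - 1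
        · subst h1
          rw [if_pos rfl, if_neg (fun e => hne3 e.symm)]
          have h5 := hxy (t-1); rw [hqtm1] at h5; omega
        by_cases h2 : z = t + 1
        · subst h2
          rw [if_pos rfl, if_neg h1]
          have h5 := hxy (t+1); rw [hqtp1] at h5; omega
        · rw [if_neg h1, if_neg h2]
          by_cases h3 : z = t
          · subst h3; simp [hxu, hyu]
          · have h5 := hxy z; rw [hmem z h3 h2 h1] at h5; omega
      · rw [vl_bump11 hn t x y]
        rw [hqt] at hval; omega
    · -- t ≠ u
      have htu' : t ≠ u := htu
      by_cases hut : u = t + 1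
      · -- source u = t+1 ; subst-free: rewrite u as t+1 everywhere? easier: u is the variable...
        -- we keep u; note q u = p u - 1
        have hqu : q u = p u - 1 := by rw [hut]; exact hqtp1
        have hpu : 1 ≤ p u := by rw [hut]; exact hptp1
        by_cases hb2 : x t + y t ≤ p t
        · refine ⟨x, y, ?_, hxu, hyu, ?_⟩
          · intro z
            beta_reduce
            by_cases h2 : z = t; · subst h2; exact hb2
            by_cases h1 : z = t + 1
            · subst h1; have h9 := hxy (t+1); rw [hqtp1] at h9; omega
            by_cases h3 : z = t - 1
            · subst h3; have h9 := hxy (t-1); rw [hqtm1] at h9; omega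
            rw [← hmem z h2 h1 h3]; exact hxy z
          · rw [hqu] at hval; omega
        · have hbt2 : x t + y t = p t + 1 := by have := hxy t; rw [hqt] at this; omega
          rcases Nat.lt_or_ge 0 (x t) with hxt | hxt
          · refine ⟨fun z => if z = t then x z - 1 else x z, y, ?_,
              by beta_reduce; rw [if_neg (fun e => htu' e.symm)]; exact hxu, hyu, ?_⟩
            · intro z
              beta_reduce
              by_cases h2 : z = t
              · subst h2; rw [if_pos rfl]; omega
              rw [if_neg h2]
              by_cases h1 : z = t + 1
              · subst h1; have h9 := hxy (t+1); rw [hqtp1] at h9; omega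
              by_cases h3 : z = t - 1
              · subst h3; have h9 := hxy (t-1); rw [hqtm1] at h9; omega
              rw [← hmem z h2 h1 h3]; exact hxy z
            · have := vl_dec_x hn u x y t htu' hxt
              rw [hqu] at hval; omega
          · have hyt : 1 ≤ y t := by omega
            refine ⟨x, fun z => if z = t then y z - 1 else y z, ?_, hxu,
              by beta_reduce; rw [if_neg (fun e => htu' e.symm)]; exact hyu, ?_⟩
            · intro z
              beta_reduce
              by_cases h2 : z = t
              · subst h2; rw [if_pos rfl]; omega
              rw [if_neg h2]
              by_cases h1 : z = t + 1
              · subst h1; have h9 := hxy (t+1); rw [hqtp1] at h9; omega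
              by_cases h3 : z = t - 1
              · subst h3; have h9 := hxy (t-1); rw [hqtm1] at h9; omega
              rw [← hmem z h2 h1 h3]; exact hxy z
            · have := vl_dec_y hn u x y t htu' hyt
              rw [hqu] at hval; omega
      · by_cases hut2 : u = t - 1
        · have hqu : q u = p u - 1 := by rw [hut2]; exact hqtm1
          have hpu : 1 ≤ p u := by rw [hut2]; exact hptm1
          by_cases hb2 : x t + y t ≤ p t
          · refine ⟨x, y, ?_, hxu, hyu, ?_⟩
            · intro z
              beta_reduce
              by_cases h2 : z = t; · subst h2; exact hb2
              by_cases h1 : z = t + 1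
              · subst h1; have h9 := hxy (t+1); rw [hqtp1] at h9; omega
              by_cases h3 : z = t - 1
              · subst h3; have h9 := hxy (t-1); rw [hqtm1] at h9; omega
              rw [← hmem z h2 h1 h3]; exact hxy z
            · rw [hqu] at hval; omega
          · have hbt2 : x t + y t = p t + 1 := by have := hxy t; rw [hqt] at this; omega
            rcases Nat.lt_or_ge 0 (x t) with hxt | hxt
            · refine ⟨fun z => if z = t then x z - 1 else x z, y, ?_,
                by beta_reduce; rw [if_neg (fun e => htu' e.symm)]; exact hxu, hyu, ?_⟩
              · intro z
                beta_reduce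
                by_cases h2 : z = t
                · subst h2; rw [if_pos rfl]; omega
                rw [if_neg h2]
                by_cases h1 : z = t + 1
                · subst h1; have h9 := hxy (t+1); rw [hqtp1] at h9; omega
                by_cases h3 : z = t - 1
                · subst h3; have h9 := hxy (t-1); rw [hqtm1] at h9; omega
                rw [← hmem z h2 h1 h3]; exact hxy z
              · have := vl_dec_x hn u x y t htu' hxt
                rw [hqu] at hval; omega
            · have hyt : 1 ≤ y t := by omega
              refine ⟨x, fun z => if z = t then y z - 1 else y z, ?_, hxu,
                by beta_reduce; rw [if_neg (fun e => htu' e.symm)]; exact hyu, ?_⟩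
              · intro z
                beta_reduce
                by_cases h2 : z = t
                · subst h2; rw [if_pos rfl]; omega
                rw [if_neg h2]
                by_cases h1 : z = t + 1
                · subst h1; have h9 := hxy (t+1); rw [hqtp1] at h9; omega
                by_cases h3 : z = t - 1
                · subst h3; have h9 := hxy (t-1); rw [hqtm1] at h9; omega
                rw [← hmem z h2 h1 h3]; exact hxy z
              · have := vl_dec_y hn u x y t htu' hyt
                rw [hqu] at hval; omega
        · -- u not involved
          have htp1 : t + 1 ≠ u := fun e => hut e.symm
          have htm1 : t - 1 ≠ u := fun e => hut2 e.symm
          have hqu : q u = p u := hmem u (fun e => htu' e.symm) (fun e => htp1 e.symm)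
            (fun e => htm1 e.symm)
          by_cases hb2 : x t + y t ≤ p t
          · refine ⟨x, y, ?_, hxu, hyu, ?_⟩
            · intro z
              beta_reduce
              by_cases h2 : z = t; · subst h2; exact hb2
              by_cases h3 : z = t + 1
              · subst h3; have h9 := hxy (t+1); rw [hqtp1] at h9; omega
              by_cases h4 : z = t - 1
              · subst h4; have h9 := hxy (t-1); rw [hqtm1] at h9; omega
              rw [← hmem z h2 h3 h4]; exact hxy z
            · rw [hqu] at hval; omega
          · have hbt2 : x t + y t = p t + 1 := by have := hxy t; rw [hqt] at this; omega
            rcases Nat.lt_or_ge 0 (x t) with hxt | hxt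
            · -- dec x at t, add 1 at t+1 on x side
              refine ⟨fun z => (if z = t then x z - 1 else x z) + (if z = t + 1 then 1 else 0), y,
                ?_, by beta_reduce; rw [if_neg (fun e => htu' e.symm), if_neg (fun e => htp1 e.symm)]; simp [hxu], hyu, ?_⟩
              · intro z
                beta_reduce
                by_cases h3 : z = t + 1
                · subst h3; rw [if_pos rfl, if_neg hne1]
                  have h9 := hxy (t+1); rw [hqtp1] at h9; omega
                by_cases h2 : z = t
                · subst h2; rw [if_pos rfl, if_neg (fun e => hne1 e.symm)]; omega
                rw [if_neg h2, if_neg h3]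
                by_cases h4 : z = t - 1
                · subst h4; have h9 := hxy (t-1); rw [hqtm1] at h9; omega
                rw [← hmem z h2 h3 h4]; exact hxy z
              · have := vl_decadd_x u x y t (t+1) htu' htp1 hxt 1
                  (by rw [one_mul]; exact wL_up hn u t htu' htp1)
                rw [hqu] at hval; omega
            · have hyt : 1 ≤ y t := by omega
              refine ⟨x, fun z => (if z = t then y z - 1 else y z) + (if z = t - 1 then 1 else 0),
                ?_, hxu, by beta_reduce; rw [if_neg (fun e => htu' e.symm), if_neg (fun e => htm1 e.symm)]; simp [hyu], ?_⟩
              · intro z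
                beta_reduce
                by_cases h3 : z = t - 1
                · subst h3; rw [if_pos rfl, if_neg hne2]
                  have h9 := hxy (t-1); rw [hqtm1] at h9; omega
                by_cases h2 : z = t
                · subst h2; rw [if_pos rfl, if_neg (fun e => hne2 e.symm)]; omega
                rw [if_neg h2, if_neg h3]
                by_cases h4 : z = t + 1
                · subst h4; have h9 := hxy (t+1); rw [hqtp1] at h9; omega
                rw [← hmem z h2 h4 h3]; exact hxy z
              · have := vl_decadd_y u x y t (t-1) htu' htm1 hyt 1
                  (by rw [one_mul]; exact wR_dn hn u t htu' htm1)
                rw [hqu] at hval; omega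

end Step
section Bridge
variable {n : ℕ} [NeZero n]

lemma good_of_two (u : Fin n) (q : Fin n → ℕ) (hq : 2 ≤ q u) : Good u q := by
  refine ⟨fun _ => 0, fun _ => 0, fun v => by simp, rfl, rfl, ?_⟩
  have h1 : WS u (wL u) (fun _ => 0) = 0 := by unfold WS; simp
  have h2 : WS u (wR u) (fun _ => 0) = 0 := by unfold WS; simp
  unfold vl; rw [h1, h2]; simpa using hq

lemma reach_good (hn : 3 ≤ n) (u : Fin n) (p : Fin n → ℕ)
    (h : KReachable (cycleGraph n) p u 2) : Good u p := by
  obtain ⟨q, hreach, hq⟩ := h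
  unfold RubblingReach at hreach
  induction hreach using Relation.ReflTransGen.head_induction_on with
  | refl => exact good_of_two u q hq
  | head hstep _ ih => exact step_good hn u _ _ hstep ih

/-- total left-weight including `u` itself at the far end -/
def BL (u : Fin n) (p : Fin n → ℕ) : ℕ := ∑ v, p v * 2^((n-1) - (u - v - 1).val)
def BR (u : Fin n) (p : Fin n → ℕ) : ℕ := ∑ v, p v * 2^((n-1) - (v - u - 1).val)
def al (u : Fin n) (p : Fin n → ℕ) : ℕ := 2 * BL u p / (2^n - 1)
def be (u : Fin n) (p : Fin n → ℕ) : ℕ := 2 * BR u p / (2^n - 1)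

lemma Mpos (hn : 3 ≤ n) : 0 < 2^n - 1 := by
  have : (2:ℕ)^3 ≤ 2^n := Nat.pow_le_pow_right (by norm_num) hn
  omega

lemma div_E_le_al (hn : 3 ≤ n) (A B : ℕ) (h : A ≤ B) : A / 2^(n-1) ≤ 2 * B / (2^n - 1) := by
  have hE : 0 < 2^(n-1) := Epos
  set k := A / 2^(n-1) with hk
  have h1 : k * 2^(n-1) ≤ A := Nat.div_mul_le_self A _
  have h2 : k * 2^n ≤ 2 * B := by
    have : 2^n = 2^(n-1) * 2 := by
      rw [← pow_succ]; congr 1; omega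
    rw [this]
    calc k * (2^(n-1) * 2) = k * 2^(n-1) * 2 := by ring
      _ ≤ A * 2 := Nat.mul_le_mul_right 2 h1
      _ ≤ 2 * B := by omega
  apply (Nat.le_div_iff_mul_le (Mpos hn)).mpr
  calc k * (2^n - 1) ≤ k * 2^n := Nat.mul_le_mul (le_refl k) (Nat.sub_le _ _)
    _ ≤ 2 * B := h2

lemma exp_eq (hn : 3 ≤ n) (u v : Fin n) (hv : v ≠ u) :
    2^((n-1) - (u - v - 1).val) = wL u v := by
  have h1 : u - v ≠ 0 := sub_ne_zero.mpr (fun e => hv e.symm)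
  have h2 := val_sub_one hn (u - v) h1
  have h3 := ddL_pos u v hv
  have h4 := ddL_le u v
  unfold wL
  rw [h2]; congr 1; omega

lemma exp_eqR (hn : 3 ≤ n) (u v : Fin n) (hv : v ≠ u) :
    2^((n-1) - (v - u - 1).val) = wR u v := by
  have h1 : v - u ≠ 0 := sub_ne_zero.mpr hv
  have h2 := val_sub_one hn (v - u) h1
  have h3 : 1 ≤ (v-u).val := ddL_pos v u (fun e => hv e.symm)
  have h4 : (v-u).val ≤ n - 1 := ddL_le v u
  unfold wR
  rw [h2]; congr 1; omega

lemma WS_le_BL (hn : 3 ≤ n) (u : Fin n) (p : Fin n → ℕ) :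
    WS u (wL u) p ≤ BL u p := by
  unfold BL
  rw [← Finset.add_sum_erase _ _ (Finset.mem_univ u)]
  have : WS u (wL u) p = ∑ v ∈ Finset.univ.erase u, p v * 2^((n-1) - (u - v - 1).val) := by
    unfold WS
    refine Finset.sum_congr rfl (fun v hv => ?_)
    rw [exp_eq hn u v (Finset.mem_erase.mp hv).1]
  omega

lemma WS_le_BR (hn : 3 ≤ n) (u : Fin n) (p : Fin n → ℕ) :
    WS u (wR u) p ≤ BR u p := by
  unfold BR
  rw [← Finset.add_sum_erase _ _ (Finset.mem_univ u)]
  have : WS u (wR u) p = ∑ v ∈ Finset.univ.erase u, p v * 2^((n-1) - (v - u - 1).val) := by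
    unfold WS
    refine Finset.sum_congr rfl (fun v hv => ?_)
    rw [exp_eqR hn u v (Finset.mem_erase.mp hv).1]
  omega

lemma bridge (hn : 3 ≤ n) (u : Fin n) (p : Fin n → ℕ) (hg : Good u p) :
    2 ≤ p u + (al u p + be u p) / 2 := by
  obtain ⟨x, y, hxy, hxu, hyu, hval⟩ := hg
  have hx : WS u (wL u) x ≤ WS u (wL u) p :=
    WS_mono u (wL u) x p (fun v => by have := hxy v; omega)
  have hy : WS u (wR u) y ≤ WS u (wR u) p :=
    WS_mono u (wR u) y p (fun v => by have := hxy v; omega)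
  have h1 : WS u (wL u) x / 2^(n-1) ≤ al u p :=
    div_E_le_al hn _ _ (hx.trans (WS_le_BL hn u p))
  have h2 : WS u (wR u) y / 2^(n-1) ≤ be u p :=
    div_E_le_al hn _ _ (hy.trans (WS_le_BR hn u p))
  unfold vl at hval
  omega

lemma two_pow_split (hn : 3 ≤ n) : (2:ℕ)^n = 2^(n-1) * 2 := by
  rw [← pow_succ]; congr 1; omega

lemma BL_rec (hn : 3 ≤ n) (u : Fin n) (p : Fin n → ℕ) :
    2 * BL (u+1) p = BL u p + p u * (2^n - 1) := by
  have key : 2 * BL (u+1) p + p u = BL u p + p u * 2^n := by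
    have e0 : BL (u+1) p = ∑ v, p v * 2^((n-1) - (u - v).val) := by
      unfold BL
      refine Finset.sum_congr rfl (fun v _ => ?_)
      congr 3; ring
    have e1 : BL (u+1) p = p u * 2^(n-1) + ∑ v ∈ Finset.univ.erase u, p v * 2^((n-1) - (u - v).val) := by
      rw [e0, ← Finset.add_sum_erase _ _ (Finset.mem_univ u)]
      congr 2
      have : u - u = 0 := by ring
      rw [this]; simp
    have e2 : BL u p = p u + ∑ v ∈ Finset.univ.erase u, p v * (2 * 2^((n-1) - (u - v).val)) := by
      unfold BL
      rw [← Finset.add_sum_erase _ _ (Finset.mem_univ u)]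
      congr 1
      · have : u - u - 1 = -1 := by ring
        rw [this, valNegOne hn]; simp
      · refine Finset.sum_congr rfl (fun v hv => ?_)
        have hvu := (Finset.mem_erase.mp hv).1
        have h1 : u - v ≠ 0 := sub_ne_zero.mpr (fun e => hvu e.symm)
        have h2 := val_sub_one hn (u - v) h1
        have h3 := ddL_pos u v hvu
        have h4 := ddL_le u v
        have : (2:ℕ) * 2^((n-1) - (u - v).val) = 2^((n-1) - (u - v).val + 1) := by ring
        rw [this, h2]
        congr 2
        omega
    have e3 : ∑ v ∈ Finset.univ.erase u, p v * (2 * 2^((n-1) - (u - v).val))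
        = 2 * ∑ v ∈ Finset.univ.erase u, p v * 2^((n-1) - (u - v).val) := by
      rw [Finset.mul_sum]
      exact Finset.sum_congr rfl (fun v _ => by ring)
    have e4 : p u * 2^n = p u * 2^(n-1) * 2 := by
      rw [two_pow_split hn]; ring
    rw [e1, e2, e3]
    omega
  have e5 : p u * 2^n = p u * (2^n - 1) + p u := by
    rw [← Nat.mul_succ]; congr 1
    have := Mpos hn; omega
  omega

lemma BR_rec (hn : 3 ≤ n) (u : Fin n) (p : Fin n → ℕ) :
    2 * BR u p = BR (u+1) p + p (u+1) * (2^n - 1) := by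
  have key : 2 * BR u p + p (u+1) = BR (u+1) p + p (u+1) * 2^n := by
    have e0 : BR (u+1) p = ∑ v, p v * 2^((n-1) - (v - u - 1 - 1).val) := by
      unfold BR
      refine Finset.sum_congr rfl (fun v _ => ?_)
      congr 3; ring
    have e1 : BR (u+1) p = p (u+1) + ∑ v ∈ Finset.univ.erase (u+1), p v * 2^((n-1) - (v - u - 1 - 1).val) := by
      rw [e0, ← Finset.add_sum_erase _ _ (Finset.mem_univ (u+1))]
      congr 2
      have : u + 1 - u - 1 - 1 = -1 := by ring
      rw [this, valNegOne hn]; simp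
    have e2 : BR u p = p (u+1) * 2^(n-1) + ∑ v ∈ Finset.univ.erase (u+1), p v * 2^((n-1) - (v - u - 1).val) := by
      unfold BR
      rw [← Finset.add_sum_erase _ _ (Finset.mem_univ (u+1))]
      congr 2
      have : u + 1 - u - 1 = 0 := by ring
      rw [this]; simp
    have e3 : ∑ v ∈ Finset.univ.erase (u+1), p v * 2^((n-1) - (v - u - 1 - 1).val)
        = ∑ v ∈ Finset.univ.erase (u+1), p v * (2 * 2^((n-1) - (v - u - 1).val)) := by
      refine Finset.sum_congr rfl (fun v hv => ?_)
      have hvu := (Finset.mem_erase.mp hv).1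
      have h1 : v - u - 1 ≠ 0 := by
        intro e
        apply hvu
        have h9 : v - (u + 1) = 0 := by rw [← e]; ring
        exact sub_eq_zero.mp h9
      have h2 := val_sub_one hn (v - u - 1) h1
      have h3 : 1 ≤ (v - u - 1).val := by have := valNeZero h1; omega
      have h4 : (v - u - 1).val ≤ n - 1 := by have := (v - u - 1).isLt; omega
      have e : (2:ℕ) * 2^((n-1) - (v - u - 1).val) = 2^((n-1) - (v - u - 1).val + 1) := by ring
      rw [e, h2]
      congr 2
      omega
    have e4 : ∑ v ∈ Finset.univ.erase (u+1), p v * (2 * 2^((n-1) - (v - u - 1).val))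
        = 2 * ∑ v ∈ Finset.univ.erase (u+1), p v * 2^((n-1) - (v - u - 1).val) := by
      rw [Finset.mul_sum]
      exact Finset.sum_congr rfl (fun v _ => by ring)
    have e5 : p (u+1) * 2^n = p (u+1) * 2^(n-1) * 2 := by
      rw [two_pow_split hn]; ring
    rw [e1, e3, e4, e2]
    omega
  have e5 : p (u+1) * 2^n = p (u+1) * (2^n - 1) + p (u+1) := by
    rw [← Nat.mul_succ]; congr 1
    have := Mpos hn; omega
  omega

lemma al_rec (hn : 3 ≤ n) (u : Fin n) (p : Fin n → ℕ) :
    al (u+1) p = p u + al u p / 2 := by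
  unfold al
  rw [BL_rec hn u p, Nat.add_mul_div_right _ _ (Mpos hn)]
  rw [Nat.div_div_eq_div_mul]
  have : (2:ℕ)^n - 1 = 1 * (2^n - 1) := by ring
  have e : 2 * BL u p / ((2^n - 1) * 2) = BL u p / (2^n - 1) := by
    rw [mul_comm (2^n - 1) 2]
    exact Nat.mul_div_mul_left _ _ (by norm_num)
  rw [e]; ring
lemma be_rec (hn : 3 ≤ n) (u : Fin n) (p : Fin n → ℕ) :
    be u p = p (u+1) + be (u+1) p / 2 := by
  unfold be
  rw [BR_rec hn u p, Nat.add_mul_div_right _ _ (Mpos hn)]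
  rw [Nat.div_div_eq_div_mul]
  have e : 2 * BR (u+1) p / ((2^n - 1) * 2) = BR (u+1) p / (2^n - 1) := by
    rw [mul_comm (2^n - 1) 2]
    exact Nat.mul_div_mul_left _ _ (by norm_num)
  rw [e]; ring

lemma lower_bound (hn : 3 ≤ n) (p : Fin n → ℕ)
    (hcond : ∀ u, 2 ≤ p u + (al u p + be u p) / 2) : n ≤ ∑ v, p v := by
  -- pointwise inequality
  have hpt : ∀ u : Fin n, 2 ≤ (al (u+1) p + 1)/2 + (be u p + 1)/2 := by
    intro u
    by_cases h0 : al (u+1) p = 0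
    · have hrec := al_rec hn u p
      rw [h0] at hrec
      have hp0 : p u = 0 := by omega
      have ha1 : al u p ≤ 1 := by omega
      have := hcond u
      rw [hp0] at this
      omega
    · by_cases h1 : be u p = 0
      · have hrec := be_rec hn u p
        rw [h1] at hrec
        have hp0 : p (u+1) = 0 := by omega
        have hb1 : be (u+1) p ≤ 1 := by omega
        have := hcond (u+1)
        rw [hp0] at this
        omega
      · omega
  -- sum identities
  have hshift : ∀ f : Fin n → ℕ, ∑ u, f (u+1) = ∑ u, f u := by
    intro f
    exact Fintype.sum_equiv (Equiv.addRight (1 : Fin n)) _ _ (fun u => rfl)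
  have hA : ∑ u, al (u+1) p = ∑ u, (p u + al u p / 2) := by
    exact Finset.sum_congr rfl (fun u _ => al_rec hn u p)
  have hA2 : ∑ u, al u p = ∑ u, p u + ∑ u, al u p / 2 := by
    rw [← hshift (fun u => al u p), hA, Finset.sum_add_distrib]
  have hB : ∑ u, be u p = ∑ u, (p (u+1) + be (u+1) p / 2) := by
    exact Finset.sum_congr rfl (fun u _ => be_rec hn u p)
  have hB2 : ∑ u, be u p = ∑ u, p u + ∑ u, be u p / 2 := by
    rw [hB, Finset.sum_add_distrib, hshift (fun u => p u), hshift (fun u => be u p / 2)]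
  -- ceil sums
  have hceilA : ∑ u, (al u p + 1)/2 + ∑ u, al u p / 2 = ∑ u, al u p := by
    rw [← Finset.sum_add_distrib]
    exact Finset.sum_congr rfl (fun u _ => by omega)
  have hceilB : ∑ u, (be u p + 1)/2 + ∑ u, be u p / 2 = ∑ u, be u p := by
    rw [← Finset.sum_add_distrib]
    exact Finset.sum_congr rfl (fun u _ => by omega)
  have hsum : ∑ u : Fin n, ((al (u+1) p + 1)/2 + (be u p + 1)/2)
      = ∑ u, (al u p + 1)/2 + ∑ u, (be u p + 1)/2 := by
    rw [Finset.sum_add_distrib, hshift (fun u => (al u p + 1)/2)]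
  have hlow : 2 * n ≤ ∑ u : Fin n, ((al (u+1) p + 1)/2 + (be u p + 1)/2) := by
    calc 2 * n = ∑ _u : Fin n, 2 := by simp [Finset.sum_const, Finset.card_univ, mul_comm]
      _ ≤ _ := Finset.sum_le_sum (fun u _ => hpt u)
  omega

end Bridge

section Upper
variable {n : ℕ} [NeZero n]

lemma ones_solvable (hn : 3 ≤ n) (u : Fin n) :
    KReachable (cycleGraph n) (fun _ => 1) u 2 := by
  refine ⟨fun x => if x = u - 1 then (fun _ => (1:ℕ)) x - 1
    else if x = u + 1 then (fun _ => (1:ℕ)) x - 1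
    else if x = u then (fun _ => (1:ℕ)) x + 1 else (fun _ => (1:ℕ)) x, ?_, ?_⟩
  · apply Relation.ReflTransGen.single
    refine Or.inr ⟨u - 1, u + 1, u, fun e => nbr_ne hn u e.symm, ?_, ?_, le_refl 1, le_refl 1, rfl⟩
    · rw [adj_iff hn]; right; ring
    · rw [adj_iff hn]; left; ring
  · beta_reduce
    rw [if_neg (fun e => sub_one_ne hn u e.symm), if_neg (fun e => add_one_ne hn u e.symm),
      if_pos rfl]

end Upper

theorem twoOptRub_cycle' (n : ℕ) (hn : 3 ≤ n) :
    sInf {m | ∃ p : Fin n → ℕ,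
      (∀ u, KReachable (cycleGraph n) p u 2) ∧ ∑ v, p v = m} = n := by
  haveI : NeZero n := ⟨by omega⟩
  have hmem : n ∈ {m | ∃ p : Fin n → ℕ,
      (∀ u, KReachable (cycleGraph n) p u 2) ∧ ∑ v, p v = m} := by
    refine ⟨fun _ => 1, fun u => ones_solvable hn u, ?_⟩
    simp
  apply le_antisymm
  · exact Nat.sInf_le hmem
  · refine le_csInf ⟨n, hmem⟩ ?_
    rintro m ⟨p, hsolv, rfl⟩
    refine lower_bound hn p (fun u => ?_)
    exact bridge hn u p (reach_good hn u p (hsolv u))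

/-- The 2-optimal rubbling number of the cycle `C_n` is `n`. -/
theorem twoOptRub_cycle (n : ℕ) (hn : 3 ≤ n) :
    sInf {m | ∃ p : Fin n → ℕ,
      (∀ u, KReachable (cycleGraph n) p u 2) ∧ ∑ v, p v = m} = n := by
  exact twoOptRub_cycle' n hn
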